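/- Let M be a contract, u_P : ℝ × ℝ → ℝ continuous, and (β, ρ) a Nash equilibrium of the game induced by M in which ρ is the point mass at some r₀ ∈ R. Then every (a,t) in the support of β satisfies t = T(a;M), and hence the principal's equilibrium payoff satisfies ∫_M (u_P(a,r₀) + t) dβ(a,t) = ∫_M (u_P(a,r₀) + T(a;M)) dβ(a,t). -/

import Mathlib

open MeasureTheory Set

/-- The agent's value of optimally choosing a plan from contract `M` given outsider action `r`:
`V(r;M) = max_{(a,t) ∈ M} (u_A(a,r) - t)`. -/
noncomputable def Vfun (uA : ℝ → ℝ → ℝ) (M : Set (ℝ × ℝ)) (r : ℝ) : ℝ :=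
  sSup ((fun p : ℝ × ℝ => uA p.1 r - p.2) '' M)

/-- The dual transfer `T(a;M) = max_{r ∈ R} (u_A(a,r) - V(r;M))`. -/
noncomputable def Tfun (uA : ℝ → ℝ → ℝ) (R : Set ℝ) (M : Set (ℝ × ℝ)) (a : ℝ) : ℝ :=
  sSup ((fun r => uA a r - Vfun uA M r) '' R)

/-- The set of dual replies `R(a;M)`: maximizers of `r ↦ u_A(a,r) - V(r;M)` over `R`. -/
def dualReplies (uA : ℝ → ℝ → ℝ) (R : Set ℝ) (M : Set (ℝ × ℝ)) (a : ℝ) : Set ℝ :=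
  {r | r ∈ R ∧ uA a r - Vfun uA M r = Tfun uA R M a}

/-- A contract is a nonempty compact subset of `A × ℝ` where `A = [a₀, ā]`. -/
def IsContract (a0 abar : ℝ) (M : Set (ℝ × ℝ)) : Prop :=
  M.Nonempty ∧ IsCompact M ∧ M ⊆ (Set.Icc a0 abar) ×ˢ (Set.univ : Set ℝ)

/-- The (topological) support of a measure: points all of whose open neighborhoods have
positive measure. -/
def mSupp {X : Type*} [TopologicalSpace X] [MeasurableSpace X]
    (μ : Measure X) : Set X :=
  {x | ∀ U : Set X, IsOpen U → x ∈ U → 0 < μ U}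

/-- A (mixed-strategy) Nash equilibrium of the game induced by contract `M`: a pair of Borel
probability measures, `β` on `M` and `ρ` on `R`, such that every plan in the support of `β`
maximizes the agent's expected payoff over `M` and every action in the support of `ρ`
maximizes the outsider's expected payoff over `R`. -/
def IsNash (uA uO : ℝ → ℝ → ℝ) (R : Set ℝ) (M : Set (ℝ × ℝ))
    (β : Measure (ℝ × ℝ)) (ρ : Measure ℝ) : Prop :=
  IsProbabilityMeasure β ∧ IsProbabilityMeasure ρ ∧
  mSupp β ⊆ M ∧ mSupp ρ ⊆ R ∧
  (∀ p ∈ mSupp β, ∀ q ∈ M, (∫ r, uA q.1 r ∂ρ) - q.2 ≤ (∫ r, uA p.1 r ∂ρ) - p.2) ∧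
  (∀ r ∈ mSupp ρ, ∀ r' ∈ R, (∫ p : ℝ × ℝ, uO p.1 r' ∂β) ≤ (∫ p : ℝ × ℝ, uO p.1 r ∂β))

lemma msupp_compl_null {X : Type*} [TopologicalSpace X]
    [SecondCountableTopology X] [MeasurableSpace X]
    (μ : Measure X) : μ (mSupp μ)ᶜ = 0 := by
  set S : Set (Set X) := {U | IsOpen U ∧ μ U = 0} with hS
  obtain ⟨T, hTc, hTS, hTU⟩ := TopologicalSpace.isOpen_sUnion_countable S (fun U hU => hU.1)
  have hcover : (mSupp μ)ᶜ ⊆ ⋃₀ S := by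
    intro x hx
    simp only [mSupp, mem_compl_iff, mem_setOf_eq, not_forall] at hx
    obtain ⟨U, hUo, hxU, hUz⟩ := hx
    exact ⟨U, ⟨hUo, le_antisymm (le_of_not_gt hUz) bot_le⟩, hxU⟩
  refine measure_mono_null (hcover.trans hTU.symm.subset) ?_
  exact (measure_sUnion_null_iff hTc).2 fun U hU => (hTS hU).2

/-- In every Nash equilibrium `(β, δ_{r₀})` of the game induced by `M`, every plan
`(a,t)` in the support of `β` satisfies `t = T(a;M)`; consequently the principal's equilibrium
payoff equals the same expression with on-path transfers replaced by dual transfers. -/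
theorem stmt9 (a0 abar rlo rhi : ℝ) (hA : a0 < abar) (hR : rlo < rhi)
    (uA uO uP : ℝ → ℝ → ℝ)
    (huA : Continuous fun p : ℝ × ℝ => uA p.1 p.2)
    (huO : Continuous fun p : ℝ × ℝ => uO p.1 p.2)
    (huP : Continuous fun p : ℝ × ℝ => uP p.1 p.2)
    (hconc : ∀ a ∈ Set.Icc a0 abar, StrictConcaveOn ℝ (Set.Icc rlo rhi) (fun r => uO a r))
    (M : Set (ℝ × ℝ)) (hM : IsContract a0 abar M)
    (β : Measure (ℝ × ℝ)) (ρ : Measure ℝ)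
    (r0 : ℝ) (hr0 : r0 ∈ Set.Icc rlo rhi)
    (hNash : IsNash uA uO (Set.Icc rlo rhi) M β ρ)
    (hρ : ρ = Measure.dirac r0) :
    (∀ p ∈ mSupp β, p.2 = Tfun uA (Set.Icc rlo rhi) M p.1) ∧
    (∫ p : ℝ × ℝ, (uP p.1 r0 + p.2) ∂β) =
      (∫ p : ℝ × ℝ, (uP p.1 r0 + Tfun uA (Set.Icc rlo rhi) M p.1) ∂β) := by

  obtain ⟨hMne, hMcomp, hMsub⟩ := hM
  obtain ⟨hβp, hρp, hβM, hρR, hAgent, -⟩ := hNash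
  have hcont : ∀ r : ℝ, Continuous fun p : ℝ × ℝ => uA p.1 r - p.2 := fun r =>
    (huA.comp (continuous_fst.prodMk continuous_const)).sub continuous_snd
  have hVb : ∀ r : ℝ, ∀ q ∈ M, uA q.1 r - q.2 ≤ Vfun uA M r := by
    intro r q hq
    exact le_csSup (hMcomp.image (hcont r)).bddAbove ⟨q, hq, rfl⟩
  have hint : ∀ a : ℝ, (∫ r, uA a r ∂ρ) = uA a r0 := by
    intro a; rw [hρ]; exact integral_dirac _ _
  have key : ∀ p ∈ mSupp β, p.2 = Tfun uA (Set.Icc rlo rhi) M p.1 := by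
    intro p hp
    have hpM := hβM hp
    have hV0 : Vfun uA M r0 = uA p.1 r0 - p.2 := by
      apply le_antisymm
      · apply csSup_le (hMne.image _)
        rintro y ⟨q, hq, rfl⟩
        have := hAgent p hp q hq
        rw [hint, hint] at this
        exact this
      · exact hVb r0 p hpM
    have hmem : p.2 ∈ (fun r => uA p.1 r - Vfun uA M r) '' Set.Icc rlo rhi :=
      ⟨r0, hr0, by show uA p.1 r0 - Vfun uA M r0 = p.2; rw [hV0]; ring⟩
    have hub : ∀ y ∈ (fun r => uA p.1 r - Vfun uA M r) '' Set.Icc rlo rhi, y ≤ p.2 := by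
      rintro y ⟨r, hr, rfl⟩
      have := hVb r p hpM
      simp only
      linarith
    show p.2 = sSup _
    exact le_antisymm (le_csSup ⟨p.2, hub⟩ hmem) (csSup_le ⟨p.2, hmem⟩ hub)
  refine ⟨key, ?_⟩
  have hae : ∀ᵐ p ∂β, p ∈ mSupp β := by
    rw [MeasureTheory.ae_iff]
    exact msupp_compl_null β
  apply integral_congr_ae
  filter_upwards [hae] with p hp
  rw [key p hp]
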